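/- Let I = (M_1,...,M_q) be a monomial ideal minimally generated by the monomials M_i, and suppose P(I) is the facet ideal of a simplicial complex Δ that has a leaf whose joint corresponds to P(M_1). Then height I = height (M_2,...,M_q). -/
import Mathlib


open MvPolynomial

/-- The monomial `x_1^{a_1} ⋯ x_n^{a_n}` with exponent vector `a`. -/
noncomputable def mon (k : Type) [Field k] {n : ℕ} (a : Fin n → ℕ) :
    MvPolynomial (Fin n) k :=
  ∏ i, X i ^ a i

/-- The polarization of the monomial with exponent vector `a`: the square-free monomial
`∏_i ∏_{j < a_i} x_{i,j}` in the doubly-indexed variables `x_{i,j}`, `0 ≤ j ≤ m`. -/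
noncomputable def polar (k : Type) [Field k] (m : ℕ) {n : ℕ} (a : Fin n → ℕ) :
    MvPolynomial (Fin n × Fin (m + 1)) k :=
  ∏ i, ∏ j ∈ Finset.univ.filter fun j : Fin (m + 1) => (j : ℕ) < a i, X (i, j)


/-- The monomial ideal generated by the monomials with exponent vectors `A t`. -/
noncomputable def monIdeal (k : Type) [Field k] {n q : ℕ} (A : Fin q → Fin n → ℕ) :
    Ideal (MvPolynomial (Fin n) k) :=
  Ideal.span (Set.range fun t => mon k (A t))

/-- The polarization of the monomial ideal generated by the monomials `A t`:
the square-free monomial ideal generated by the polarizations of the generators. -/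
noncomputable def polarIdeal (k : Type) [Field k] (m : ℕ) {n q : ℕ}
    (A : Fin q → Fin n → ℕ) : Ideal (MvPolynomial (Fin n × Fin (m + 1)) k) :=
  Ideal.span (Set.range fun t => polar k m (A t))


/-- The height of an ideal: the infimum of the heights (in the prime spectrum)
of the prime ideals containing it. -/
noncomputable def ht {R : Type} [CommRing R] (I : Ideal R) : ℕ∞ :=
  ⨅ p ∈ {p : PrimeSpectrum R | I ≤ p.asIdeal}, Order.height p


/-- The vertex support of the polarization of the monomial with exponent vector `a`:
the facet `{(i,j) | j < a_i}` on the vertex set of doubly-indexed variables. -/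
def suppF (m : ℕ) {n : ℕ} (a : Fin n → ℕ) : Finset (Fin n × Fin (m + 1)) :=
  Finset.univ.filter fun v => (v.2 : ℕ) < a v.1

/-- `F` is a leaf of the simplicial complex with facet set `Δ`: either `F` is the
only facet, or there is another facet `G` containing `F ∩ (Δ ∖ F)`. -/
def IsLeaf {V : Type} [DecidableEq V] (Δ : Finset (Finset V)) (F : Finset V) : Prop :=
  F ∈ Δ ∧ (Δ = {F} ∨ ∃ G ∈ Δ.erase F, ∀ H ∈ Δ.erase F, F ∩ H ⊆ G)

/-- A simplicial complex (given by its facet set) is a forest if every nonempty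
subcollection has a leaf. -/
def IsForest {V : Type} [DecidableEq V] (Δ : Finset (Finset V)) : Prop :=
  ∀ Γ ⊆ Δ, Γ.Nonempty → ∃ F, IsLeaf Γ F

/-- A tree is a connected forest: connectivity is expressed by chains of facets with
consecutive nonempty intersections. -/
def IsTree {V : Type} [DecidableEq V] (Δ : Finset (Finset V)) : Prop :=
  IsForest Δ ∧ ∀ F ∈ Δ, ∀ G ∈ Δ,
    Relation.ReflTransGen (fun a b : Finset V => a ∈ Δ ∧ b ∈ Δ ∧ (a ∩ b).Nonempty) F G

/-- The facet complex of the polarization `𝒫(I)` of the monomial ideal with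
exponent vectors `A`. -/
def facetComplex (m : ℕ) {n q : ℕ} (A : Fin q → Fin n → ℕ) :
    Finset (Finset (Fin n × Fin (m + 1))) :=
  Finset.image (fun t => suppF m (A t)) Finset.univ

section Aux

open MvPolynomial

/-- A prime contains a monomial iff it contains a variable in its support. -/
lemma mon_mem_prime {k : Type} [Field k] {n : ℕ} (a : Fin n → ℕ)
    (p : Ideal (MvPolynomial (Fin n) k)) [hp : p.IsPrime] :
    mon k a ∈ p ↔ ∃ i, 0 < a i ∧ X i ∈ p := by
  unfold mon
  rw [Ideal.IsPrime.prod_mem_iff]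
  constructor
  · rintro ⟨i, -, hi⟩
    rcases Nat.eq_zero_or_pos (a i) with h | h
    · rw [h, pow_zero] at hi
      exact absurd (p.eq_top_iff_one.mpr hi) hp.ne_top
    · exact ⟨i, h, (hp.pow_mem_iff_mem _ h).mp hi⟩
  · rintro ⟨i, h, hx⟩
    exact ⟨i, Finset.mem_univ _, (hp.pow_mem_iff_mem _ h).mpr hx⟩

lemma rename_mon (k : Type) [Field k] {n : ℕ} (σ : Equiv.Perm (Fin n)) (a : Fin n → ℕ) :
    rename σ (mon k a) = mon k (a ∘ σ.symm) := by
  unfold mon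
  rw [map_prod]
  simp only [map_pow, rename_X]
  rw [← Equiv.prod_comp σ fun j => X j ^ (a ∘ σ.symm) j]
  simp

/-- The order isomorphism on prime spectra induced by a ring isomorphism. -/
noncomputable def specOrderIso {R S : Type} [CommRing R] [CommRing S] (e : R ≃+* S) :
    PrimeSpectrum S ≃o PrimeSpectrum R where
  toFun p := ⟨p.asIdeal.comap (e : R →+* S), Ideal.IsPrime.comap _⟩
  invFun p := ⟨p.asIdeal.comap (e.symm : S →+* R), Ideal.IsPrime.comap _⟩
  left_inv p := by
    apply PrimeSpectrum.ext
    show (p.asIdeal.comap (e : R →+* S)).comap (e.symm : S →+* R) = p.asIdeal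
    rw [Ideal.comap_comap]
    ext x
    simp [Ideal.mem_comap]
  right_inv p := by
    apply PrimeSpectrum.ext
    show (p.asIdeal.comap (e.symm : S →+* R)).comap (e : R →+* S) = p.asIdeal
    rw [Ideal.comap_comap]
    ext x
    simp [Ideal.mem_comap]
  map_rel_iff' := by
    intro p q
    constructor
    · intro h x hx
      have h1 : e.symm x ∈ p.asIdeal.comap (e : R →+* S) := by
        rw [Ideal.mem_comap]
        simpa using hx
      have h2 : e.symm x ∈ Ideal.comap (e : R →+* S) q.asIdeal := h h1
      rw [Ideal.mem_comap] at h2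
      simpa using h2
    · intro h x hx
      exact h hx

lemma suppF_mem {m n : ℕ} (a : Fin n → ℕ) (v : Fin n × Fin (m + 1)) :
    v ∈ suppF m a ↔ (v.2 : ℕ) < a v.1 := by
  simp [suppF]

lemma ht_le_height {R : Type} [CommRing R] {I : Ideal R} {p : PrimeSpectrum R}
    (h : I ≤ p.asIdeal) : ht I ≤ Order.height p := by
  rw [ht]
  exact iInf_le_of_le p (iInf_le_of_le h le_rfl)

lemma le_ht {R : Type} [CommRing R] {I : Ideal R} {a : ℕ∞}
    (h : ∀ p : PrimeSpectrum R, I ≤ p.asIdeal → a ≤ Order.height p) : a ≤ ht I := by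
  rw [ht]
  exact le_iInf₂ h

end Aux

set_option maxHeartbeats 1000000 in
/-- if `I = (M₁,…,M_q)` is minimally generated and the facet complex
of `𝒫(I)` has a leaf whose joint is `𝒫(M₁)` (here indexed by `0`), then removing
`M₁` does not change the height: `height I = height (M₂,…,M_q)`. -/
theorem joint_removal_height (k : Type) [Field k] (m n q : ℕ)
    (A : Fin (q + 1) → Fin n → ℕ) (hA : ∀ t i, A t i ≤ m + 1)
    (hmin : ∀ t t', mon k (A t) ∣ mon k (A t') → t = t')
    (hjoint : ∃ F ∈ facetComplex m A, IsLeaf (facetComplex m A) F ∧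
      suppF m (A 0) ∈ (facetComplex m A).erase F ∧
      (∀ H ∈ (facetComplex m A).erase F, F ∩ H ⊆ suppF m (A 0)) ∧
      (F ∩ suppF m (A 0)).Nonempty) :
    ht (monIdeal k A) =
      ht (Ideal.span (Set.range fun t : Fin q => mon k (A t.succ))) := by
  classical
  obtain ⟨F, hF, -, hG, hsub, hne⟩ := hjoint
  obtain ⟨s, -, rfl⟩ := Finset.mem_image.mp hF
  set I' : Ideal (MvPolynomial (Fin n) k) :=
    Ideal.span (Set.range fun t : Fin q => mon k (A t.succ)) with hI'
  -- injectivity of the polarized supports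
  have hinj : ∀ t t' : Fin (q + 1), suppF m (A t) = suppF m (A t') → t = t' := by
    intro t t' h
    have hA_eq : A t = A t' := by
      funext i
      have hiff : ∀ j : Fin (m + 1), ((j : ℕ) < A t i ↔ (j : ℕ) < A t' i) := by
        intro j
        constructor
        · intro hj
          have : ((i, j) : Fin n × Fin (m + 1)) ∈ suppF m (A t) := (suppF_mem _ _).mpr hj
          rw [h] at this
          exact (suppF_mem _ _).mp this
        · intro hj
          have : ((i, j) : Fin n × Fin (m + 1)) ∈ suppF m (A t') := (suppF_mem _ _).mpr hj
          rw [← h] at this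
          exact (suppF_mem _ _).mp this
      by_contra hne'
      rcases Nat.lt_or_ge (A t i) (A t' i) with hlt | hge
      · have hb : A t i < m + 1 := lt_of_lt_of_le hlt (hA t' i)
        have := (hiff ⟨A t i, hb⟩).mpr hlt
        simp at this
      · have hlt : A t' i < A t i := lt_of_le_of_ne hge (Ne.symm hne')
        have hb : A t' i < m + 1 := lt_of_lt_of_le hlt (hA t i)
        have := (hiff ⟨A t' i, hb⟩).mp hlt
        simp at this
    exact hmin t t' (by rw [hA_eq])
  have hs0 : s ≠ 0 := by
    intro h
    exact (Finset.mem_erase.mp hG).1 (by rw [h])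
  -- key combinatorial fact from the joint condition
  have key : ∀ t, t ≠ s → ∀ i, 0 < A s i → 0 < A t i → 0 < A 0 i := by
    intro t hts i hsi hti
    have h0m : (0 : ℕ) < m + 1 := Nat.succ_pos m
    have hmem : ((i, (⟨0, h0m⟩ : Fin (m + 1))) : Fin n × Fin (m + 1)) ∈
        suppF m (A s) ∩ suppF m (A t) := by
      rw [Finset.mem_inter, suppF_mem, suppF_mem]
      exact ⟨hsi, hti⟩
    have hHmem : suppF m (A t) ∈ (facetComplex m A).erase (suppF m (A s)) := by
      rw [Finset.mem_erase]
      refine ⟨fun h => hts (hinj t s h), ?_⟩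
      exact Finset.mem_image.mpr ⟨t, Finset.mem_univ _, rfl⟩
    have := hsub _ hHmem hmem
    exact (suppF_mem _ _).mp this
  -- the common vertex w of the leaf and the joint
  obtain ⟨⟨w, j⟩, hw⟩ := hne
  rw [Finset.mem_inter, suppF_mem, suppF_mem] at hw
  have hws : 0 < A s w := lt_of_le_of_lt (Nat.zero_le _) hw.1
  have hw0 : 0 < A 0 w := lt_of_le_of_lt (Nat.zero_le _) hw.2
  -- the two inequalities
  have hle : I' ≤ monIdeal k A := by
    apply Ideal.span_mono
    rintro _ ⟨t, rfl⟩
    exact ⟨t.succ, rfl⟩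
  apply le_antisymm
  · -- hard direction : ht I ≤ ht I'
    apply le_ht
    intro p hp'
    by_cases hcase : ∀ i, 0 < A 0 i → X i ∉ p.asIdeal
    · -- p misses the support of M₀ : swap variables
      obtain ⟨s', hs'⟩ := Fin.exists_succ_eq_of_ne_zero hs0
      have hmonS : mon k (A s) ∈ p.asIdeal := by
        rw [← hs']
        exact hp' (Ideal.subset_span ⟨s', rfl⟩)
      obtain ⟨v, hv, hvp⟩ := (mon_mem_prime (A s) p.asIdeal).mp hmonS
      have hv0 : ¬ 0 < A 0 v := fun h => hcase v h hvp
      set σ : Equiv.Perm (Fin n) := Equiv.swap v w with hσ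
      set e : MvPolynomial (Fin n) k ≃+* MvPolynomial (Fin n) k :=
        (renameEquiv k σ).toRingEquiv with he
      set p' : PrimeSpectrum (MvPolynomial (Fin n) k) := specOrderIso e p with hp'def
      have hecoe : ∀ f : MvPolynomial (Fin n) k, (e : _ →+* _) f = rename σ f := fun f => rfl
      have hI : monIdeal k A ≤ p'.asIdeal := by
        rw [monIdeal, Ideal.span_le]
        rintro _ ⟨t, rfl⟩
        show mon k (A t) ∈ p.asIdeal.comap (e : _ →+* _)
        rw [Ideal.mem_comap, hecoe, rename_mon, Equiv.symm_swap]
        rw [mon_mem_prime]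
        by_cases ht0 : t = 0
        · refine ⟨v, ?_, hvp⟩
          subst ht0
          simpa [Function.comp, Equiv.swap_apply_left] using hw0
        · by_cases hts : t = s
          · refine ⟨v, ?_, hvp⟩
            subst hts
            simpa [Function.comp, Equiv.swap_apply_left] using hws
          · obtain ⟨t', ht'⟩ := Fin.exists_succ_eq_of_ne_zero ht0
            have hmonT : mon k (A t) ∈ p.asIdeal := by
              rw [← ht']
              exact hp' (Ideal.subset_span ⟨t', rfl⟩)
            obtain ⟨u, hu, hup⟩ := (mon_mem_prime (A t) p.asIdeal).mp hmonT
            by_cases huw : u = w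
            · refine ⟨v, ?_, hvp⟩
              subst huw
              simpa [Function.comp, Equiv.swap_apply_left] using hu
            · have huv : u ≠ v := by
                intro h
                subst h
                exact hv0 (key t hts u hv hu)
              refine ⟨u, ?_, hup⟩
              simpa [Function.comp, Equiv.swap_apply_of_ne_of_ne huv huw] using hu
      have hht : Order.height p' = Order.height p := Order.height_orderIso (specOrderIso e) p
      rw [← hht]
      exact ht_le_height hI
    · -- p contains a variable of the support of M₀, hence contains I
      push_neg at hcase
      obtain ⟨i, hi, hxi⟩ := hcase
      have hI : monIdeal k A ≤ p.asIdeal := by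
        rw [monIdeal, Ideal.span_le]
        rintro _ ⟨t, rfl⟩
        by_cases ht0 : t = 0
        · subst ht0
          exact (mon_mem_prime (A 0) p.asIdeal).mpr ⟨i, hi, hxi⟩
        · obtain ⟨t', ht'⟩ := Fin.exists_succ_eq_of_ne_zero ht0
          rw [← ht']
          exact hp' (Ideal.subset_span ⟨t', rfl⟩)
      exact ht_le_height hI
  · -- easy direction : ht I' ≤ ht I
    apply le_ht
    intro p hp
    exact ht_le_height (le_trans hle hp)
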